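/- arXiv:2601.19058 — 2 statements merged into one kernel-verified Lean document; each statement's English description precedes it below -/
import Mathlib

section
/- Every element y of Y = closure(Φ(X)) is of at least one of the following types: (1) y ∈ Φ(X); (2) there exists i > 0 such that y_n = β for all n ≥ i; (3) there exists j < 0 such that y_n = β for all n ≤ j. -/
open MeasureTheory Filter Topology
open scoped ENNReal

/-- The odometer map on `X = {0,1}^ℕ` (adding one with carry in binary). -/
def Tod (x : ℕ → Bool) : ℕ → Bool := fun k =>
  if ∀ i < k, x i = true then !(x k) else x k

/-- The inverse of the odometer map (subtracting one with borrow). -/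
def TodInv (x : ℕ → Bool) : ℕ → Bool := fun k =>
  if ∀ i < k, x i = false then !(x k) else x k

/-- The number determined by the first `k` binary digits of `x`. -/
def DN (k : ℕ) (x : ℕ → Bool) : ℕ := ∑ i ∈ Finset.range k, 2 ^ i * (x i).toNat

/-- The cylinder `[0^i]` of sequences starting with `i` zeros. -/
def cyl0 (i : ℕ) : Set (ℕ → Bool) := {x | ∀ j < i, x j = false}

/-- `A = ⋃_{i=5}^∞ ⋃_{j=0}^{i-1} T^j([0^i])`. -/
def Aset : Set (ℕ → Bool) := ⋃ (i : ℕ) (_ : 5 ≤ i) (j : ℕ) (_ : j < i), Tod^[j] '' cyl0 i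

/-- `A_k = ⋃_{i=5}^{k} ⋃_{j=0}^{i-1} T^j([0^i])`. -/
def Ak (k : ℕ) : Set (ℕ → Bool) :=
  ⋃ (i : ℕ) (_ : 5 ≤ i) (_ : i ≤ k) (j : ℕ) (_ : j < i), Tod^[j] '' cyl0 i

/-- `E_k = ⋃_{i=k+1}^∞ ⋃_{j=0}^{i-1} T^j([0^i])`. -/
def Ek (k : ℕ) : Set (ℕ → Bool) :=
  ⋃ (i : ℕ) (_ : k + 1 ≤ i) (j : ℕ) (_ : j < i), Tod^[j] '' cyl0 i

/-- `T^n` for `n : ℤ` (using the inverse odometer for negative `n`). -/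
def zIter (n : ℤ) (x : ℕ → Bool) : ℕ → Bool :=
  if 0 ≤ n then Tod^[n.toNat] x else TodInv^[(-n).toNat] x

/-- The factor map `Φ : X → Z = {α,β}^ℤ`, with `β = true`, `α = false`:
`Φ(x)_n = β` iff `T^n(x) ∈ A`. -/
noncomputable def Phi (x : ℕ → Bool) : ℤ → Bool := fun n =>
  @decide (zIter n x ∈ Aset) (Classical.propDecidable _)

/-- The subshift `Y`, the closure of `Φ(X)` in the full two-sided shift. -/
def Ysub : Set (ℤ → Bool) := closure (Set.range Phi)

/-- The shift map on `Z = {α,β}^ℤ`. -/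
def shiftZ (z : ℤ → Bool) : ℤ → Bool := fun n => z (n + 1)

/-- The cylinder in `Z` given by a word `w` of length `n` placed at positions `0,…,n-1`. -/
def cylZ (n : ℕ) (w : Fin n → Bool) : Set (ℤ → Bool) :=
  {z | ∀ i : Fin n, z ((i : ℕ) : ℤ) = w i}


/-! ### Auxiliary lemmas -/

lemma tod_apply (x : ℕ → Bool) (k : ℕ) :
    Tod x k = if ∀ i < k, x i = true then !(x k) else x k := rfl

lemma todInv_apply (x : ℕ → Bool) (k : ℕ) :
    TodInv x k = if ∀ i < k, x i = false then !(x k) else x k := rfl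

lemma todInv_tod (x : ℕ → Bool) : TodInv (Tod x) = x := by
  classical
  funext k
  rw [todInv_apply]
  by_cases h : ∀ i < k, x i = true
  · have h1 : ∀ i < k, Tod x i = false := by
      intro i hi
      rw [tod_apply, if_pos (fun l hl => h l (hl.trans hi)), h i hi]
      rfl
    rw [if_pos h1, tod_apply, if_pos h, Bool.not_not]
  · have hex : ∃ i, i < k ∧ x i = false := by
      push_neg at h
      obtain ⟨i, hi, hxi⟩ := h
      exact ⟨i, hi, by simpa using hxi⟩
    set i0 := Nat.find hex with hi0def
    obtain ⟨hi0k, hxi0⟩ := Nat.find_spec hex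
    have hmin : ∀ l < i0, x l = true := by
      intro l hl
      have hnl := Nat.find_min hex hl
      simp only [not_and] at hnl
      cases hxl : x l with
      | false => exact absurd hxl (hnl (hl.trans hi0k))
      | true => rfl
    have hT : Tod x i0 = true := by
      rw [tod_apply, if_pos hmin, hxi0]; rfl
    have hc1 : ¬ ∀ i < k, Tod x i = false := by
      intro hc
      rw [hc i0 hi0k] at hT
      exact Bool.noConfusion hT
    have hc2 : ¬ ∀ i < k, x i = true := by
      intro hc
      rw [hc i0 hi0k] at hxi0
      exact Bool.noConfusion hxi0
    rw [if_neg hc1, tod_apply, if_neg hc2]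

lemma tod_todInv (x : ℕ → Bool) : Tod (TodInv x) = x := by
  classical
  funext k
  rw [tod_apply]
  by_cases h : ∀ i < k, x i = false
  · have h1 : ∀ i < k, TodInv x i = true := by
      intro i hi
      rw [todInv_apply, if_pos (fun l hl => h l (hl.trans hi)), h i hi]
      rfl
    rw [if_pos h1, todInv_apply, if_pos h, Bool.not_not]
  · have hex : ∃ i, i < k ∧ x i = true := by
      push_neg at h
      obtain ⟨i, hi, hxi⟩ := h
      exact ⟨i, hi, by simpa using hxi⟩
    set i0 := Nat.find hex with hi0def
    obtain ⟨hi0k, hxi0⟩ := Nat.find_spec hex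
    have hmin : ∀ l < i0, x l = false := by
      intro l hl
      have hnl := Nat.find_min hex hl
      simp only [not_and] at hnl
      cases hxl : x l with
      | true => exact absurd hxl (hnl (hl.trans hi0k))
      | false => rfl
    have hT : TodInv x i0 = false := by
      rw [todInv_apply, if_pos hmin, hxi0]; rfl
    have hc1 : ¬ ∀ i < k, TodInv x i = true := by
      intro hc
      rw [hc i0 hi0k] at hT
      exact Bool.noConfusion hT
    have hc2 : ¬ ∀ i < k, x i = false := by
      intro hc
      rw [hc i0 hi0k] at hxi0
      exact Bool.noConfusion hxi0
    rw [if_neg hc1, todInv_apply, if_neg hc2]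

lemma isClopen_ball (k : ℕ) (b : Bool) : IsClopen {x : ℕ → Bool | ∀ i < k, x i = b} := by
  have h : {x : ℕ → Bool | ∀ i < k, x i = b}
      = ⋂ i ∈ Finset.range k, {x : ℕ → Bool | x i = b} := by
    ext x; simp
  rw [h]
  exact isClopen_biInter_finset fun i _ =>
    (isClopen_discrete {b}).preimage (continuous_apply i)

lemma continuous_Tod : Continuous Tod := by
  refine continuous_pi fun k => ?_
  unfold Tod
  refine Continuous.if ?_ ?_ ?_
  · intro a ha
    rw [(isClopen_ball k true).frontier_eq] at ha
    exact absurd ha (Set.notMem_empty a)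
  · exact (continuous_of_discreteTopology (f := Bool.not)).comp (continuous_apply k)
  · exact continuous_apply k

lemma continuous_TodInv : Continuous TodInv := by
  refine continuous_pi fun k => ?_
  unfold TodInv
  refine Continuous.if ?_ ?_ ?_
  · intro a ha
    rw [(isClopen_ball k false).frontier_eq] at ha
    exact absurd ha (Set.notMem_empty a)
  · exact (continuous_of_discreteTopology (f := Bool.not)).comp (continuous_apply k)
  · exact continuous_apply k

lemma continuous_zIter (n : ℤ) : Continuous (zIter n) := by
  unfold zIter
  split
  · exact continuous_Tod.iterate _
  · exact continuous_TodInv.iterate _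

lemma image_iter_eq_preimage (j : ℕ) (S : Set (ℕ → Bool)) :
    Tod^[j] '' S = TodInv^[j] ⁻¹' S :=
  congrFun (Set.image_eq_preimage_of_inverse
    (Function.LeftInverse.iterate todInv_tod j)
    (Function.LeftInverse.iterate tod_todInv j)) S

lemma isClopen_piece (i j : ℕ) : IsClopen (Tod^[j] '' cyl0 i) := by
  rw [image_iter_eq_preimage]
  exact (isClopen_ball i false).preimage (continuous_TodInv.iterate j)

lemma isOpen_Aset : IsOpen Aset :=
  isOpen_iUnion fun i => isOpen_iUnion fun _ => isOpen_iUnion fun j =>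
    isOpen_iUnion fun _ => (isClopen_piece i j).isOpen

lemma isClosed_Ak (M : ℕ) : IsClosed (Ak M) := by
  have h : Ak M = ⋃ i ∈ Finset.Icc 5 M, ⋃ j ∈ Finset.range i, Tod^[j] '' cyl0 i := by
    ext z
    constructor
    · intro hz
      rcases Set.mem_iUnion.mp hz with ⟨i, hz⟩
      rcases Set.mem_iUnion.mp hz with ⟨h5, hz⟩
      rcases Set.mem_iUnion.mp hz with ⟨hM, hz⟩
      rcases Set.mem_iUnion.mp hz with ⟨j, hz⟩
      rcases Set.mem_iUnion.mp hz with ⟨hj, hz⟩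
      exact Set.mem_iUnion.mpr ⟨i, Set.mem_iUnion.mpr ⟨Finset.mem_Icc.mpr ⟨h5, hM⟩,
        Set.mem_iUnion.mpr ⟨j, Set.mem_iUnion.mpr ⟨Finset.mem_range.mpr hj, hz⟩⟩⟩⟩
    · intro hz
      rcases Set.mem_iUnion.mp hz with ⟨i, hz⟩
      rcases Set.mem_iUnion.mp hz with ⟨hi, hz⟩
      rcases Set.mem_iUnion.mp hz with ⟨j, hz⟩
      rcases Set.mem_iUnion.mp hz with ⟨hj, hz⟩
      rcases Finset.mem_Icc.mp hi with ⟨h5, hM⟩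
      exact Set.mem_iUnion.mpr ⟨i, Set.mem_iUnion.mpr ⟨h5, Set.mem_iUnion.mpr ⟨hM,
        Set.mem_iUnion.mpr ⟨j, Set.mem_iUnion.mpr ⟨Finset.mem_range.mp hj, hz⟩⟩⟩⟩⟩
  rw [h]
  exact Set.Finite.isClosed_biUnion (Finset.finite_toSet _) fun i _ =>
    Set.Finite.isClosed_biUnion (Finset.finite_toSet _) fun j _ => (isClopen_piece i j).isClosed

lemma mem_Aset_iff (z : ℕ → Bool) :
    z ∈ Aset ↔ ∃ i j, 5 ≤ i ∧ j < i ∧ z ∈ Tod^[j] '' cyl0 i := by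
  constructor
  · intro hz
    rcases Set.mem_iUnion.mp hz with ⟨i, hz⟩
    rcases Set.mem_iUnion.mp hz with ⟨h5, hz⟩
    rcases Set.mem_iUnion.mp hz with ⟨j, hz⟩
    rcases Set.mem_iUnion.mp hz with ⟨hj, hz⟩
    exact ⟨i, j, h5, hj, hz⟩
  · rintro ⟨i, j, h5, hj, hz⟩
    exact Set.mem_iUnion.mpr ⟨i, Set.mem_iUnion.mpr ⟨h5,
      Set.mem_iUnion.mpr ⟨j, Set.mem_iUnion.mpr ⟨hj, hz⟩⟩⟩⟩

lemma mem_Ak_iff (M : ℕ) (z : ℕ → Bool) :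
    z ∈ Ak M ↔ ∃ i j, 5 ≤ i ∧ i ≤ M ∧ j < i ∧ z ∈ Tod^[j] '' cyl0 i := by
  constructor
  · intro hz
    rcases Set.mem_iUnion.mp hz with ⟨i, hz⟩
    rcases Set.mem_iUnion.mp hz with ⟨h5, hz⟩
    rcases Set.mem_iUnion.mp hz with ⟨hM, hz⟩
    rcases Set.mem_iUnion.mp hz with ⟨j, hz⟩
    rcases Set.mem_iUnion.mp hz with ⟨hj, hz⟩
    exact ⟨i, j, h5, hM, hj, hz⟩
  · rintro ⟨i, j, h5, hM, hj, hz⟩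
    exact Set.mem_iUnion.mpr ⟨i, Set.mem_iUnion.mpr ⟨h5, Set.mem_iUnion.mpr ⟨hM,
      Set.mem_iUnion.mpr ⟨j, Set.mem_iUnion.mpr ⟨hj, hz⟩⟩⟩⟩⟩

lemma Ak_subset_Aset (M : ℕ) : Ak M ⊆ Aset := by
  intro z hz
  rcases (mem_Ak_iff M z).mp hz with ⟨i, j, h5, _, hj, hz⟩
  exact (mem_Aset_iff z).mpr ⟨i, j, h5, hj, hz⟩

lemma zIter_succ (n : ℤ) (x : ℕ → Bool) : zIter (n + 1) x = Tod (zIter n x) := by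
  by_cases h0 : 0 ≤ n
  · have h1 : (0 : ℤ) ≤ n + 1 := by omega
    have h2 : (n + 1).toNat = n.toNat + 1 := by omega
    rw [zIter, zIter, if_pos h1, if_pos h0, h2, Function.iterate_succ_apply']
  · by_cases h1 : n = -1
    · subst h1
      norm_num [zIter]
      exact (tod_todInv x).symm
    · have h2 : ¬ (0 : ℤ) ≤ n + 1 := by omega
      have h3 : (-n).toNat = (-(n + 1)).toNat + 1 := by omega
      rw [zIter, zIter, if_neg h2, if_neg h0, h3, Function.iterate_succ_apply',
        tod_todInv]

lemma zIter_add_nat (n : ℤ) (m : ℕ) (x : ℕ → Bool) :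
    zIter (n + m) x = Tod^[m] (zIter n x) := by
  induction m with
  | zero => simp
  | succ m ih =>
    have h : (n + (m + 1 : ℕ) : ℤ) = (n + m) + 1 := by push_cast; ring
    rw [h, zIter_succ, ih, Function.iterate_succ_apply']

lemma zIter_sub_nat (n : ℤ) (m : ℕ) (x : ℕ → Bool) :
    zIter (n - m) x = TodInv^[m] (zIter n x) := by
  induction m with
  | zero => simp
  | succ m ih =>
    have h : (n - (m : ℕ)) = (n - ((m + 1 : ℕ) : ℤ)) + 1 := by push_cast; ring
    have h2 : zIter (n - (m : ℕ)) x = Tod (zIter (n - ((m + 1 : ℕ) : ℤ)) x) := by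
      rw [h, zIter_succ]
    have h3 : zIter (n - ((m + 1 : ℕ) : ℤ)) x = TodInv (zIter (n - (m : ℕ)) x) := by
      rw [h2, todInv_tod]
    rw [h3, ih, Function.iterate_succ_apply']

lemma phi_true_iff (x : ℕ → Bool) (n : ℤ) : Phi x n = true ↔ zIter n x ∈ Aset := by
  simp [Phi]

lemma prop_true (z : ℕ → Bool) (n0 : ℤ) (i j : ℕ) (h5 : 5 ≤ i) (hj : j < i)
    (hw : zIter n0 z ∈ Tod^[j] '' cyl0 i) (n : ℤ) (h1 : n0 - j ≤ n) (h2 : n < n0 - j + i) :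
    Phi z n = true := by
  obtain ⟨w, hw1, hw2⟩ := hw
  have hbase : zIter (n0 - j) z = w := by
    rw [zIter_sub_nat, ← hw2, Function.LeftInverse.iterate todInv_tod j w]
  set l := (n - (n0 - j)).toNat with hl
  have hn : n = (n0 - j) + (l : ℤ) := by omega
  have hli : l < i := by omega
  have hz : zIter n z = Tod^[l] w := by rw [hn, zIter_add_nat, hbase]
  rw [phi_true_iff, hz, mem_Aset_iff]
  exact ⟨i, l, h5, hli, Set.mem_image_of_mem _ hw1⟩

/-- every `y ∈ Y` is in `Φ(X)`, or has a right tail of all `β`'s, or has a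
left tail of all `β`'s. -/
theorem stmt14 (y : ℤ → Bool) (hy : y ∈ Ysub) :
    y ∈ Set.range Phi ∨
    (∃ i : ℤ, 0 < i ∧ ∀ n ≥ i, y n = true) ∨
    (∃ j : ℤ, j < 0 ∧ ∀ n ≤ j, y n = true) := by
  classical
  obtain ⟨u, hu, hlim⟩ := mem_closure_iff_seq_limit.mp hy
  choose xs hxs using hu
  obtain ⟨x, -, φ, hφ, hxlim⟩ := isCompact_univ.tendsto_subseq (x := xs)
    (fun k => Set.mem_univ _)
  have hU : ∀ n : ℤ, ∀ᶠ k in atTop, Phi (xs (φ k)) n = y n := by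
    intro n
    have h0 : Tendsto (fun k => u (φ k)) atTop (𝓝 y) := hlim.comp hφ.tendsto_atTop
    have h1 : Tendsto (fun k => Phi (xs (φ k)) n) atTop (𝓝 (y n)) := by
      have h2 := (tendsto_pi_nhds.mp h0) n
      have h3 : (fun k => Phi (xs (φ k)) n) = fun k => u (φ k) n :=
        funext fun k => by rw [hxs]
      rw [h3]; exact h2
    have h4 := h1.eventually_mem ((isOpen_discrete {y n}).mem_nhds rfl)
    filter_upwards [h4] with k hk
    exact hk
  have htend : ∀ n : ℤ, Tendsto (fun k => zIter n (xs (φ k))) atTop (𝓝 (zIter n x)) :=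
    fun n => ((continuous_zIter n).tendsto x).comp hxlim
  by_cases hcase : ∀ n : ℤ, y n = Phi x n
  · exact Or.inl ⟨x, (funext hcase).symm⟩
  push_neg at hcase
  obtain ⟨n0, hn0⟩ := hcase
  have hPx : Phi x n0 = false := by
    cases hb : Phi x n0 with
    | false => rfl
    | true =>
      have hmem : zIter n0 x ∈ Aset := (phi_true_iff _ _).mp hb
      have hev : ∀ᶠ k in atTop, Phi (xs (φ k)) n0 = true := by
        filter_upwards [(htend n0).eventually_mem (isOpen_Aset.mem_nhds hmem)] with k hk
        exact (phi_true_iff _ _).mpr hk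
      obtain ⟨k, h1, h2⟩ := ((hU n0).and hev).exists
      exact absurd ((h1.symm.trans h2).trans hb.symm) hn0
  have hy0 : y n0 = true := by
    cases hc : y n0 with
    | true => rfl
    | false => exact absurd (hc.trans hPx.symm) hn0
  have hnotA : zIter n0 x ∉ Aset := fun h => by
    rw [(phi_true_iff x n0).mpr h] at hPx
    exact Bool.noConfusion hPx
  have hW : ∀ᶠ k in atTop, zIter n0 (xs (φ k)) ∈ Aset := by
    filter_upwards [hU n0] with k hk
    exact (phi_true_iff _ _).mp (hk.trans hy0)
  have hAkM : ∀ M : ℕ, ∀ᶠ k in atTop, zIter n0 (xs (φ k)) ∉ Ak M := by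
    intro M
    have hmemc : zIter n0 x ∈ (Ak M)ᶜ := fun h => hnotA (Ak_subset_Aset M h)
    filter_upwards [(htend n0).eventually_mem ((isClosed_Ak M).isOpen_compl.mem_nhds hmemc)]
      with k hk
    exact hk
  have hStar : ∀ M : ℕ, ∀ᶠ k in atTop,
      ∃ i j, 5 ≤ i ∧ j < i ∧ M < i ∧ zIter n0 (xs (φ k)) ∈ Tod^[j] '' cyl0 i := by
    intro M
    filter_upwards [hW, hAkM M] with k hk1 hk2
    obtain ⟨i, j, h5, hji, hmem⟩ := (mem_Aset_iff _).mp hk1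
    rcases le_or_gt i M with hle | hlt
    · exact absurd ((mem_Ak_iff M _).mpr ⟨i, j, h5, hle, hji, hmem⟩) hk2
    · exact ⟨i, j, h5, hji, hlt, hmem⟩
  by_cases hL : ∀ M : ℕ, ∃ᶠ k in atTop,
      ∃ i j, 5 ≤ i ∧ j < i ∧ M ≤ j ∧ zIter n0 (xs (φ k)) ∈ Tod^[j] '' cyl0 i
  · refine Or.inr (Or.inr ⟨min n0 (-1), lt_of_le_of_lt (min_le_right _ _) (by norm_num),
      fun n hn => ?_⟩)
    have hn' : n ≤ n0 := le_trans hn (min_le_left _ _)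
    obtain ⟨k, ⟨i, j, h5, hji, hMj, hmem⟩, hk2⟩ :=
      ((hL (n0 - n).toNat).and_eventually (hU n)).exists
    have hPt : Phi (xs (φ k)) n = true :=
      prop_true _ n0 i j h5 hji hmem n (by omega) (by omega)
    rw [← hk2, hPt]
  · push_neg at hL
    obtain ⟨M0, hM0⟩ := hL
    have hM0 : ∀ᶠ k in atTop, ¬ ∃ i j, 5 ≤ i ∧ j < i ∧ M0 ≤ j ∧ zIter n0 (xs (φ k)) ∈ Tod^[j] '' cyl0 i := by
      filter_upwards [hM0] with k hk; push_neg; exact hk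
    refine Or.inr (Or.inl ⟨max n0 1, lt_of_lt_of_le one_pos (le_max_right _ _),
      fun n hn => ?_⟩)
    have hn' : n0 ≤ n := le_trans (le_max_left _ _) hn
    obtain ⟨k, ⟨⟨i, j, h5, hji, hMi, hmem⟩, hk2⟩, hk3⟩ :=
      (((hStar (M0 + (n - n0).toNat)).and hM0).and (hU n)).exists
    have hjM0 : j < M0 := by
      by_contra hge
      exact hk2 ⟨i, j, h5, hji, le_of_not_gt hge, hmem⟩
    have hPt : Phi (xs (φ k)) n = true :=
      prop_true _ n0 i j h5 hji hmem n (by omega) (by omega)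
    rw [← hk3, hPt]
end

section
/- Let y ∈ Y = closure(Φ(X)) satisfy (y)_i^∞ ≠ β^∞ for all i > 0. Then for every l ≥ 5 there exists K ∈ ℕ such that σ^K(y) lies in the cylinder [α.β^l], i.e., σ^K(y)_{-1} = α and σ^K(y)_0 = ... = σ^K(y)_{l-1} = β. -/
open MeasureTheory Filter Topology
open scoped ENNReal

lemma sum_two_pow (n : ℕ) : ∑ i ∈ Finset.range n, 2 ^ i = 2 ^ n - 1 := by
  induction n with
  | zero => simp
  | succ k ih =>
    rw [Finset.sum_range_succ, ih]
    have : 1 ≤ 2 ^ k := Nat.one_le_two_pow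
    have h2 : 2 ^ (k + 1) = 2 ^ k + 2 ^ k := by ring
    omega

lemma DN_lt (l : ℕ) (x : ℕ → Bool) : DN l x < 2 ^ l := by
  induction l with
  | zero => simp [DN]
  | succ n ih =>
    have ih' : ∑ i ∈ Finset.range n, 2 ^ i * (x i).toNat < 2 ^ n := ih
    have h1 : 2 ^ n * (x n).toNat ≤ 2 ^ n := by cases h : x n <;> simp
    have h2 : 2 ^ (n + 1) = 2 ^ n + 2 ^ n := by ring
    rw [DN, Finset.sum_range_succ]
    omega

lemma DN_eq_zero_iff (l : ℕ) (x : ℕ → Bool) : DN l x = 0 ↔ ∀ j < l, x j = false := by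
  rw [DN, Finset.sum_eq_zero_iff]
  constructor
  · intro h j hj
    have := h j (Finset.mem_range.mpr hj)
    simpa using this
  · intro h i hi
    simp [h i (Finset.mem_range.mp hi)]

lemma DN_Tod (l : ℕ) (x : ℕ → Bool) : DN l (Tod x) ≡ DN l x + 1 [MOD 2 ^ l] := by
  by_cases h : ∀ i < l, x i = true
  · -- all true
    have hx : DN l x = 2 ^ l - 1 := by
      rw [DN]
      rw [show (∑ i ∈ Finset.range l, 2 ^ i * (x i).toNat) = ∑ i ∈ Finset.range l, 2 ^ i from
        Finset.sum_congr rfl (fun i hi => by simp [h i (Finset.mem_range.mp hi)])]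
      exact sum_two_pow l
    have hT : DN l (Tod x) = 0 := by
      rw [DN_eq_zero_iff]
      intro j hj
      have hc : ∀ i < j, x i = true := fun i hi => h i (lt_trans hi hj)
      have : Tod x j = !(x j) := by unfold Tod; rw [if_pos hc]
      rw [this, h j hj]
      rfl
    have h1 : 1 ≤ 2 ^ l := Nat.one_le_two_pow
    rw [hT, hx]
    show 0 % 2 ^ l = (2 ^ l - 1 + 1) % 2 ^ l
    rw [Nat.sub_add_cancel h1, Nat.zero_mod, Nat.mod_self]
  · -- there is a minimal false index c < l
    push_neg at h
    obtain ⟨w, hwl, hw⟩ := h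
    have hex : ∃ i, x i = false := ⟨w, by simpa using hw⟩
    set c := Nat.find hex with hc
    have hxc : x c = false := Nat.find_spec hex
    have hcl : c < l := lt_of_le_of_lt (Nat.find_le (by simpa using hw)) hwl
    have hmin : ∀ i < c, x i = true := by
      intro i hi
      have := Nat.find_min hex hi
      simpa using this
    -- Tod values
    have hT_lt : ∀ i < c, Tod x i = false := by
      intro i hi
      have hall : ∀ j < i, x j = true := fun j hj => hmin j (lt_trans hj hi)
      have : Tod x i = !(x i) := by unfold Tod; rw [if_pos hall]
      rw [this, hmin i hi]
      rfl
    have hT_c : Tod x c = true := by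
      have : Tod x c = !(x c) := by unfold Tod; rw [if_pos hmin]
      rw [this, hxc]
      rfl
    have hT_gt : ∀ i, c < i → Tod x i = x i := by
      intro i hi
      have : ¬ ∀ j < i, x j = true := by
        intro hall
        have := hall c hi
        rw [hxc] at this
        exact Bool.false_ne_true this
      have h2 : Tod x i = x i := by unfold Tod; rw [if_neg this]
      exact h2
    -- split sums
    have hsplit : ∀ z : ℕ → Bool, DN l z =
        (∑ i ∈ Finset.range (c + 1), 2 ^ i * (z i).toNat) +
        ∑ i ∈ Finset.Ico (c + 1) l, 2 ^ i * (z i).toNat := by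
      intro z
      rw [DN, Finset.range_eq_Ico, ← Finset.sum_Ico_consecutive _ (Nat.zero_le _) hcl]
      simp only [Finset.range_eq_Ico, Nat.succ_eq_add_one]
    have htail : (∑ i ∈ Finset.Ico (c + 1) l, 2 ^ i * (Tod x i).toNat) =
        ∑ i ∈ Finset.Ico (c + 1) l, 2 ^ i * (x i).toNat := by
      apply Finset.sum_congr rfl
      intro i hi
      have hci : c + 1 ≤ i := (Finset.mem_Ico.mp hi).1
      rw [hT_gt i (by omega)]
    have hhead_x : (∑ i ∈ Finset.range (c + 1), 2 ^ i * (x i).toNat) = 2 ^ c - 1 := by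
      rw [Finset.sum_range_succ, hxc]
      rw [show (∑ i ∈ Finset.range c, 2 ^ i * (x i).toNat) = ∑ i ∈ Finset.range c, 2 ^ i from
        Finset.sum_congr rfl (fun i hi => by simp [hmin i (Finset.mem_range.mp hi)])]
      simp [sum_two_pow]
    have hhead_T : (∑ i ∈ Finset.range (c + 1), 2 ^ i * (Tod x i).toNat) = 2 ^ c := by
      rw [Finset.sum_range_succ, hT_c]
      rw [show (∑ i ∈ Finset.range c, 2 ^ i * (Tod x i).toNat) = 0 from
        Finset.sum_eq_zero (fun i hi => by simp [hT_lt i (Finset.mem_range.mp hi)])]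
      simp
    have h1 : 1 ≤ 2 ^ c := Nat.one_le_two_pow
    have heq : DN l (Tod x) = DN l x + 1 := by
      rw [hsplit (Tod x), hsplit x, htail, hhead_x, hhead_T]
      omega
    rw [heq]

lemma DN_iterate (l k : ℕ) (x : ℕ → Bool) :
    DN l (Tod^[k] x) ≡ DN l x + k [MOD 2 ^ l] := by
  induction k with
  | zero => simpa using Nat.ModEq.refl (DN l x)
  | succ k ih =>
    rw [Function.iterate_succ_apply']
    calc DN l (Tod (Tod^[k] x)) ≡ DN l (Tod^[k] x) + 1 [MOD 2 ^ l] := DN_Tod l _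
      _ ≡ DN l x + k + 1 [MOD 2 ^ l] := ih.add_right 1
      _ = DN l x + (k + 1) := by omega

lemma exists_iter_cyl0 (l : ℕ) (x : ℕ → Bool) : ∃ k < 2 ^ l, Tod^[k] x ∈ cyl0 l := by
  have hlt := DN_lt l x
  by_cases h0 : DN l x = 0
  · exact ⟨0, Nat.pow_pos (by norm_num), by
      simpa [cyl0] using (DN_eq_zero_iff l x).mp h0⟩
  · refine ⟨2 ^ l - DN l x, by omega, ?_⟩
    have hmod := DN_iterate l (2 ^ l - DN l x) x
    have : DN l x + (2 ^ l - DN l x) = 2 ^ l := by omega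
    rw [this] at hmod
    have h2 : DN l (Tod^[2 ^ l - DN l x] x) % 2 ^ l = 0 := by
      have := hmod
      unfold Nat.ModEq at this
      simpa using this
    have h3 : DN l (Tod^[2 ^ l - DN l x] x) = 0 := by
      rw [Nat.mod_eq_of_lt (DN_lt l _)] at h2
      exact h2
    simpa [cyl0] using (DN_eq_zero_iff l _).mp h3

lemma mem_Aset_of_cyl0 {l j : ℕ} (hl : 5 ≤ l) (hj : j < l) {z : ℕ → Bool}
    (hz : z ∈ cyl0 l) : Tod^[j] z ∈ Aset := by
  simp only [Aset, Set.mem_iUnion]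
  exact ⟨l, hl, j, hj, z, hz, rfl⟩

lemma Phi_natCast (x : ℕ → Bool) (m : ℕ) :
    Phi x (m : ℤ) = true ↔ Tod^[m] x ∈ Aset := by
  classical
  have hz : zIter (m : ℤ) x = Tod^[m] x := by
    unfold zIter
    rw [if_pos (Int.natCast_nonneg m), Int.toNat_natCast]
  unfold Phi
  rw [hz]
  exact ⟨fun h => of_decide_eq_true h, fun h => decide_eq_true h⟩

lemma exists_block (y : ℤ → Bool) (hy : y ∈ Ysub) (l : ℕ) (hl : 5 ≤ l) (N : ℕ) :
    ∃ K' : ℕ, N ≤ K' ∧ ∀ j : ℕ, j < l → y ((K' : ℤ) + j) = true := by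
  classical
  set s : Finset ℤ := (Finset.range (2 ^ l + l)).image (fun j : ℕ => (N : ℤ) + (j : ℤ)) with hs
  set U := (s : Set ℤ).pi (fun i => ({y i} : Set Bool)) with hU_def
  have hU : IsOpen U := isOpen_set_pi s.finite_toSet (fun _ _ => isOpen_discrete _)
  have hyU : y ∈ U := fun i _ => rfl
  have hne : (U ∩ Set.range Phi).Nonempty := mem_closure_iff.mp hy U hU hyU
  obtain ⟨z, hzU, x, rfl⟩ := hne
  obtain ⟨k, hk, hcyl⟩ := exists_iter_cyl0 l (Tod^[N] x)
  refine ⟨N + k, Nat.le_add_right N k, ?_⟩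
  intro j hj
  have hmemA : Tod^[N + k + j] x ∈ Aset := by
    have : Tod^[N + k + j] x = Tod^[j] (Tod^[k] (Tod^[N] x)) := by
      rw [show N + k + j = j + (k + N) by omega, Function.iterate_add_apply,
        Function.iterate_add_apply]
    rw [this]
    exact mem_Aset_of_cyl0 hl hj hcyl
  have hPhi : Phi x ((N + k + j : ℕ) : ℤ) = true := (Phi_natCast x _).mpr hmemA
  have hmem : ((N : ℤ) + k + j) ∈ s := by
    have h1 : k + j ∈ Finset.range (2 ^ l + l) := Finset.mem_range.mpr (by omega)
    have h2 := Finset.mem_image_of_mem (fun j : ℕ => (N : ℤ) + (j : ℤ)) h1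
    have hcst : ((N : ℤ) + k + j) = (N : ℤ) + ((k + j : ℕ) : ℤ) := by push_cast; ring
    rw [hs, hcst]
    exact h2
  have hagree : Phi x ((N : ℤ) + k + j) = y ((N : ℤ) + k + j) := hzU _ hmem
  have hcast : ((N + k : ℕ) : ℤ) + (j : ℤ) = (N : ℤ) + k + j := by push_cast; ring
  rw [hcast, ← hagree]
  rw [show (N : ℤ) + k + j = ((N + k + j : ℕ) : ℤ) by push_cast; ring]
  exact hPhi

/-- if `y ∈ Y` has no right tail of all `β`'s, then for every `l ≥ 5` there
is `K ∈ ℕ` with `σ^K(y) ∈ [α.β^l]`, i.e. `y_{K-1} = α` and `y_K = ⋯ = y_{K+l-1} = β`. -/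
theorem stmt15 (y : ℤ → Bool) (hy : y ∈ Ysub)
    (hfwd : ∀ i : ℤ, 0 < i → ¬ ∀ n ≥ i, y n = true)
    (l : ℕ) (hl : 5 ≤ l) :
    ∃ K : ℕ, y ((K : ℤ) - 1) = false ∧ ∀ m : ℕ, m < l → y ((K : ℤ) + m) = true := by
  classical
  have h1 := hfwd 1 one_pos
  push_neg at h1
  obtain ⟨n, hn1, hnf⟩ := h1
  have hnf' : y n = false := by simpa using hnf
  have hn0 : (0 : ℤ) ≤ n := by omega
  set N : ℕ := n.toNat + 1 with hN
  obtain ⟨K', hK'N, hblock⟩ := exists_block y hy l hl N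
  have hntK : n.toNat + 1 ≤ K' := hK'N
  have hQex : ∃ d : ℕ, y ((K' : ℤ) - d) = false := by
    refine ⟨K' - n.toNat, ?_⟩
    have hpos : ((K' : ℤ) - (K' - n.toNat : ℕ)) = n := by
      have := Int.toNat_of_nonneg hn0
      omega
    rw [hpos, hnf']
  set d := Nat.find hQex with hd_def
  have hd : y ((K' : ℤ) - d) = false := Nat.find_spec hQex
  have hdle : d ≤ K' - n.toNat := Nat.find_min' hQex (by
    have hpos : ((K' : ℤ) - (K' - n.toNat : ℕ)) = n := by
      have := Int.toNat_of_nonneg hn0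
      omega
    rw [hpos, hnf'])
  have hdK' : d ≤ K' := by omega
  have hd1 : 1 ≤ d := by
    by_contra h0
    have hdz : d = 0 := by omega
    have hb := hblock 0 (by omega)
    rw [hdz] at hd
    simp only [Nat.cast_zero, sub_zero] at hd
    simp only [Nat.cast_zero, add_zero] at hb
    rw [hd] at hb
    exact Bool.false_ne_true hb
  refine ⟨K' - d + 1, ?_, ?_⟩
  · have heq : ((K' - d + 1 : ℕ) : ℤ) - 1 = (K' : ℤ) - d := by omega
    rw [heq]
    exact hd
  · intro m hm
    by_cases hcase : d ≤ 1 + m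
    · -- position is ≥ K'
      have hj : (K' - d + 1 + m) - K' < l := by omega
      have hb := hblock ((K' - d + 1 + m) - K') hj
      have heq : ((K' - d + 1 : ℕ) : ℤ) + m = (K' : ℤ) + ((K' - d + 1 + m) - K' : ℕ) := by omega
      rw [heq]
      exact hb
    · -- position is < K' : use minimality of d
      have hd' : d - (1 + m) < d := by omega
      have hmin := Nat.find_min hQex hd'
      have heq : ((K' - d + 1 : ℕ) : ℤ) + m = (K' : ℤ) - (d - (1 + m) : ℕ) := by omega
      rw [heq]
      revert hmin
      cases y ((K' : ℤ) - (d - (1 + m) : ℕ)) <;> simp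
end
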